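/- Let b be a coefficient sequence with b₀ ≠ 0, so that b is invertible in the ψ-ring of Ward, and let b⁻¹ denote its inverse with respect to the Ward product. Then the ψ-derivative of the reciprocal satisfies D(b⁻¹) = −b⁻¹·(b⁻¹ ∗_{1,0} D b). -/

import Mathlib

open Finset

/-- The ψ-factorial: ψₙ! = ψ₁ψ₂⋯ψₙ, with ψ₀! = 1. -/
noncomputable def psiFact (ψ : ℕ → ℂ) : ℕ → ℂ
  | 0 => 1
  | n + 1 => psiFact ψ n * ψ (n + 1)

/-- The ψ-binomial coefficient binomψ(n,k) = ψₙ!/(ψₖ!·ψ_{n−k}!). -/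
noncomputable def psiBinom (ψ : ℕ → ℂ) (n k : ℕ) : ℂ :=
  psiFact ψ n / (psiFact ψ k * psiFact ψ (n - k))

/-- The Fontané numbers F(n,k) = (ψₙ − ψₖ)/ψ_{n−k}. -/
noncomputable def Fker (ψ : ℕ → ℂ) (n k : ℕ) : ℂ :=
  (ψ n - ψ k) / ψ (n - k)

/-- The Ward product of coefficient sequences. -/
noncomputable def wardMul (ψ : ℕ → ℂ) (a b : ℕ → ℂ) (n : ℕ) : ℂ :=
  ∑ k ∈ Finset.range (n + 1), psiBinom ψ n k * a k * b (n - k)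

/-- The Fontané product ∗_{i,j} of coefficient sequences. -/
noncomputable def fontane (ψ : ℕ → ℂ) (i j : ℕ) (a b : ℕ → ℂ) (n : ℕ) : ℂ :=
  ∑ k ∈ Finset.range (n + 1), Fker ψ (n + i) (k + j) * psiBinom ψ n k * a k * b (n - k)

/-- The ψ-derivative on coefficient sequences: the shift (D a)ₙ = a_{n+1}. -/
def Dpsi (a : ℕ → ℂ) (n : ℕ) : ℂ := a (n + 1)

lemma psiFact_ne_zero (ψ : ℕ → ℂ) (hψ : ∀ n : ℕ, 1 ≤ n → ψ n ≠ 0) (n : ℕ) :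
    psiFact ψ n ≠ 0 := by
  induction n with
  | zero => simp [psiFact]
  | succ n ih => exact mul_ne_zero ih (hψ (n + 1) (by omega))

/-- The ψ-EGF transform: a ↦ ∑ aₙ/ψₙ! xⁿ. -/
noncomputable def phiW (ψ : ℕ → ℂ) (a : ℕ → ℂ) : PowerSeries ℂ :=
  PowerSeries.mk fun n => a n / psiFact ψ n

lemma phiW_inj (ψ : ℕ → ℂ) (hψ : ∀ n : ℕ, 1 ≤ n → ψ n ≠ 0) :
    Function.Injective (phiW ψ) := by
  intro a b h
  funext n
  have h' := congrArg (PowerSeries.coeff n) h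
  simp only [phiW, PowerSeries.coeff_mk] at h'
  have hfn := psiFact_ne_zero ψ hψ n
  rw [div_eq_div_iff hfn hfn] at h'
  exact mul_right_cancel₀ hfn h'

lemma phiW_wardMul (ψ : ℕ → ℂ) (hψ : ∀ n : ℕ, 1 ≤ n → ψ n ≠ 0) (a b : ℕ → ℂ) :
    phiW ψ (wardMul ψ a b) = phiW ψ a * phiW ψ b := by
  ext n
  rw [PowerSeries.coeff_mul, Finset.Nat.sum_antidiagonal_eq_sum_range_succ_mk]
  simp only [phiW, PowerSeries.coeff_mk, wardMul]
  rw [Finset.sum_div]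
  refine Finset.sum_congr rfl fun k hk => ?_
  have h1 := psiFact_ne_zero ψ hψ n
  have h2 := psiFact_ne_zero ψ hψ k
  have h3 := psiFact_ne_zero ψ hψ (n - k)
  unfold psiBinom
  field_simp

lemma phiW_delta (ψ : ℕ → ℂ) :
    phiW ψ (fun n => if n = 0 then (1 : ℂ) else 0) = 1 := by
  ext n
  simp only [phiW, PowerSeries.coeff_mk, PowerSeries.coeff_one]
  rcases n with _ | n
  · simp [psiFact]
  · simp

lemma phiW_neg (ψ : ℕ → ℂ) (a : ℕ → ℂ) :
    phiW ψ (fun n => -(a n)) = -(phiW ψ a) := by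
  ext n
  simp [phiW, neg_div]

lemma aux_frac (A B C X Y Z : ℂ) (hB : B ≠ 0) (hC : C ≠ 0) (hY : Y ≠ 0) (hZ : Z ≠ 0) :
    A * X / (B * Y * (C * Z)) = A / (B * (C * Z)) + (X - Y) / Z * (A / (B * Y * C)) := by
  rw [div_mul_div_comm]
  rw [div_add_div _ _ (mul_ne_zero hB (mul_ne_zero hC hZ))
    (mul_ne_zero hZ (mul_ne_zero (mul_ne_zero hB hY) hC))]
  rw [div_eq_div_iff (mul_ne_zero (mul_ne_zero hB hY) (mul_ne_zero hC hZ))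
    (mul_ne_zero (mul_ne_zero hB (mul_ne_zero hC hZ))
      (mul_ne_zero hZ (mul_ne_zero (mul_ne_zero hB hY) hC)))]
  ring

lemma binom_succ (ψ : ℕ → ℂ) (hψ : ∀ n : ℕ, 1 ≤ n → ψ n ≠ 0) {n k : ℕ} (hk : k ≤ n) :
    psiBinom ψ (n + 1) (k + 1)
      = psiBinom ψ n k + Fker ψ (n + 1) (k + 1) * psiBinom ψ n (k + 1) := by
  have hf := psiFact_ne_zero ψ hψ
  rcases eq_or_lt_of_le hk with rfl | h
  · have hx : psiFact ψ k * ψ (k + 1) ≠ 0 := mul_ne_zero (hf k) (hψ _ (by omega))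
    simp [psiBinom, Fker, Nat.sub_self, psiFact, sub_self, zero_div,
      div_self hx, div_self (hf k)]
  · obtain ⟨d, hd⟩ : ∃ d, n - k = d + 1 := ⟨n - k - 1, by omega⟩
    have e1 : n + 1 - (k + 1) = d + 1 := by omega
    have e2 : n - (k + 1) = d := by omega
    unfold psiBinom Fker
    rw [e1, e2, hd]
    have hfn1 : psiFact ψ (n + 1) = psiFact ψ n * ψ (n + 1) := rfl
    have hfk1 : psiFact ψ (k + 1) = psiFact ψ k * ψ (k + 1) := rfl
    have hfd1 : psiFact ψ (d + 1) = psiFact ψ d * ψ (d + 1) := rfl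
    rw [hfn1, hfk1, hfd1]
    exact aux_frac _ _ _ _ _ _ (hf k) (hf d) (hψ (k + 1) (by omega)) (hψ (d + 1) (by omega))

lemma leibniz (ψ : ℕ → ℂ) (hψ0 : ψ 0 = 0) (hψ : ∀ n : ℕ, 1 ≤ n → ψ n ≠ 0)
    (a b : ℕ → ℂ) (n : ℕ) :
    Dpsi (wardMul ψ a b) n = wardMul ψ (Dpsi a) b n + fontane ψ 1 0 a (Dpsi b) n := by
  have hf := psiFact_ne_zero ψ hψ
  have hpf0 : psiFact ψ 0 = 1 := rfl
  have h0 : psiBinom ψ (n + 1) 0 = 1 := by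
    unfold psiBinom
    rw [Nat.sub_zero, hpf0, one_mul, div_self (hf (n + 1))]
  have hb0 : psiBinom ψ n 0 = 1 := by
    unfold psiBinom
    rw [Nat.sub_zero, hpf0, one_mul, div_self (hf n)]
  have hF0 : Fker ψ (n + 1) 0 = 1 := by
    simp [Fker, hψ0, div_self (hψ (n + 1) (by omega))]
  show wardMul ψ a b (n + 1) = _
  calc wardMul ψ a b (n + 1)
      = (∑ i ∈ Finset.range (n + 1), psiBinom ψ (n + 1) (i + 1) * a (i + 1) * b (n - i))
          + a 0 * b (n + 1) := by
        unfold wardMul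
        rw [Finset.sum_range_succ']
        congr 1
        · refine Finset.sum_congr rfl fun i _ => ?_
          rw [Nat.succ_sub_succ]
        · rw [Nat.sub_zero, h0, one_mul]
    _ = (∑ i ∈ Finset.range (n + 1),
          (psiBinom ψ n i * a (i + 1) * b (n - i)
            + Fker ψ (n + 1) (i + 1) * psiBinom ψ n (i + 1) * a (i + 1) * b (n - i)))
          + a 0 * b (n + 1) := by
        congr 1
        refine Finset.sum_congr rfl fun i hi => ?_
        have hi' : i ≤ n := by
          have := Finset.mem_range.mp hi; omega
        rw [binom_succ ψ hψ hi']
        ring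
    _ = wardMul ψ (Dpsi a) b n + fontane ψ 1 0 a (Dpsi b) n := by
        rw [Finset.sum_add_distrib]
        have hW : wardMul ψ (Dpsi a) b n
            = ∑ i ∈ Finset.range (n + 1), psiBinom ψ n i * a (i + 1) * b (n - i) := rfl
        have hFsum : fontane ψ 1 0 a (Dpsi b) n
            = (∑ i ∈ Finset.range (n + 1),
                Fker ψ (n + 1) (i + 1) * psiBinom ψ n (i + 1) * a (i + 1) * b (n - i))
              + a 0 * b (n + 1) := by
          unfold fontane Dpsi
          simp only [Nat.add_zero]
          rw [Finset.sum_range_succ'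
            (fun k => Fker ψ (n + 1) k * psiBinom ψ n k * a k * b (n - k + 1)) n]
          rw [Finset.sum_range_succ
            (fun i => Fker ψ (n + 1) (i + 1) * psiBinom ψ n (i + 1) * a (i + 1) * b (n - i)) n]
          have hlast : Fker ψ (n + 1) (n + 1) * psiBinom ψ n (n + 1) * a (n + 1) * b (n - n) = 0 := by
            simp [Fker, Nat.sub_self, sub_self, zero_div]
          rw [hlast, add_zero]
          congr 1
          · refine Finset.sum_congr rfl fun i hi => ?_
            have hi' : i < n := Finset.mem_range.mp hi
            have e : n - (i + 1) + 1 = n - i := by omega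
            simp only [e]
          · simp only [Nat.sub_zero, hF0, hb0, one_mul]
        rw [hW, hFsum]
        ring

/-- The reciprocal ψ-rule: D(b⁻¹) = −b⁻¹·(b⁻¹ ∗_{1,0} D b). -/
theorem Dpsi_reciprocal (ψ : ℕ → ℂ) (hψ0 : ψ 0 = 0) (hψ1 : ψ 1 = 1) (hψ : ∀ n : ℕ, 1 ≤ n → ψ n ≠ 0)
    (b binv : ℕ → ℂ) (hb : b 0 ≠ 0)
    (hinv : wardMul ψ b binv = fun n => if n = 0 then 1 else 0) :
    Dpsi binv
      = fun n => -(wardMul ψ binv (fontane ψ 1 0 binv (Dpsi b)) n) := by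
  have hmul := phiW_wardMul ψ hψ
  have hδ := phiW_delta ψ
  have hbinv : phiW ψ b * phiW ψ binv = 1 := by
    rw [← hmul, hinv]; exact hδ
  have hcomm : wardMul ψ binv b = fun n => if n = 0 then (1 : ℂ) else 0 := by
    apply phiW_inj ψ hψ
    rw [hmul, hδ, mul_comm]
    exact hbinv
  have hL : wardMul ψ (Dpsi binv) b = fun n => -(fontane ψ 1 0 binv (Dpsi b) n) := by
    funext n
    have h := leibniz ψ hψ0 hψ binv b n
    rw [hcomm] at h
    have h0 : Dpsi (fun n => if n = 0 then (1 : ℂ) else 0) n = 0 := by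
      simp [Dpsi]
    rw [h0] at h
    exact eq_neg_of_add_eq_zero_left h.symm
  have h2 : phiW ψ (Dpsi binv) * phiW ψ b
      = -(phiW ψ (fontane ψ 1 0 binv (Dpsi b))) := by
    rw [← hmul, hL, phiW_neg]
  apply phiW_inj ψ hψ
  rw [phiW_neg ψ (fun n => wardMul ψ binv (fontane ψ 1 0 binv (Dpsi b)) n)]
  show phiW ψ (Dpsi binv) = -(phiW ψ (wardMul ψ binv (fontane ψ 1 0 binv (Dpsi b))))
  rw [hmul]
  calc phiW ψ (Dpsi binv)
      = phiW ψ (Dpsi binv) * (phiW ψ b * phiW ψ binv) := by rw [hbinv, mul_one]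
    _ = (phiW ψ (Dpsi binv) * phiW ψ b) * phiW ψ binv := by ring
    _ = -(phiW ψ binv * phiW ψ (fontane ψ 1 0 binv (Dpsi b))) := by rw [h2]; ring
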